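/- Let n ≥ 1, let M be an n×n complex matrix, and let B be a nonempty proper subset of its index set with complement B̄. Suppose λ ∈ ℂ is not an eigenvalue of M_{B̄B̄} and w ≠ 0 satisfies R_B(M;λ) w = λ w. Then the vector v defined by v_B = w and v_{B̄} = −(M_{B̄B̄} − λI)^{−1} M_{B̄B} w is a nonzero vector satisfying M v = λ v; that is, every eigenpair of the isospectral reduction at λ lifts to an eigenpair of M with the same eigenvalue. -/

import Mathlib

open Matrix

open Polynomial in

lemma my_eval_charpoly {m : Type*} [Fintype m] [DecidableEq m] (N : Matrix m m ℂ) (lam : ℂ) :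
    (N.charpoly).eval lam = (lam • (1 : Matrix m m ℂ) - N).det := by
  rw [Matrix.charpoly, ← Polynomial.coe_evalRingHom, RingHom.map_det]
  congr 1
  ext i j
  by_cases h : i = j
  · subst h; simp [charmatrix_apply_eq, Matrix.one_apply]
  · simp [charmatrix_apply_ne _ _ _ h, Matrix.one_apply, h]

lemma my_block_aux {k l : Type*} [Fintype k] [Fintype l] [DecidableEq k] [DecidableEq l]
    (P : Matrix k k ℂ) (Q : Matrix k l ℂ) (Rm : Matrix l k ℂ) (S : Matrix l l ℂ)
    (lam : ℂ) (w : k → ℂ) (hS : IsUnit (S - lam • (1 : Matrix l l ℂ)).det)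
    (heig : (P - Q * (S - lam • (1 : Matrix l l ℂ))⁻¹ * Rm).mulVec w = lam • w) :
    P.mulVec w + Q.mulVec (-(((S - lam • (1 : Matrix l l ℂ))⁻¹ * Rm).mulVec w)) = lam • w ∧
    Rm.mulVec w + S.mulVec (-(((S - lam • (1 : Matrix l l ℂ))⁻¹ * Rm).mulVec w))
      = lam • (-(((S - lam • (1 : Matrix l l ℂ))⁻¹ * Rm).mulVec w)) := by
  set A := S - lam • (1 : Matrix l l ℂ) with hA
  set u : l → ℂ := -((A⁻¹ * Rm).mulVec w) with hu
  have hAu : A.mulVec (A⁻¹.mulVec (Rm.mulVec w)) = Rm.mulVec w := by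
    rw [mulVec_mulVec, Matrix.mul_nonsing_inv A hS, one_mulVec]
  constructor
  · have : Q.mulVec u = -((Q * (A⁻¹ * Rm)).mulVec w) := by
      rw [hu, mulVec_neg, mulVec_mulVec]
    rw [this, ← heig]
    rw [Matrix.sub_mulVec, Matrix.mul_assoc, sub_eq_add_neg]
  · have hS' : S = A + lam • (1 : Matrix l l ℂ) := by rw [hA, sub_add_cancel]
    rw [hS', add_mulVec, smul_mulVec, one_mulVec]
    rw [hu, mulVec_neg, ← mulVec_mulVec, hAu]
    simp

/-- Every eigenpair `(λ, w)` of the isospectral reduction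
`R_B(M;λ) = M_{BB} − M_{BB̄}(M_{B̄B̄} − λI)⁻¹M_{B̄B}` (with `λ` not an eigenvalue of
`M_{B̄B̄}`) lifts to an eigenpair of `M`: the vector `v` with `v_B = w` and
`v_{B̄} = −(M_{B̄B̄} − λI)⁻¹ M_{B̄B} w` is nonzero and satisfies `M v = λ v`. -/
theorem eigenpair_lifts_from_isospectral_reduction
    {n : ℕ} (hn : 1 ≤ n) (M : Matrix (Fin n) (Fin n) ℂ)
    (B : Finset (Fin n)) (hBne : B.Nonempty) (hBproper : B ≠ Finset.univ)
    (lam : ℂ) (w : ↥B → ℂ) (hw : w ≠ 0)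
    (hlam : Polynomial.eval lam
      (Matrix.charpoly (M.submatrix (Subtype.val : ↥(Bᶜ) → Fin n)
        (Subtype.val : ↥(Bᶜ) → Fin n))) ≠ 0)
    (heig : (M.submatrix (Subtype.val : ↥B → Fin n) (Subtype.val : ↥B → Fin n)
      - M.submatrix (Subtype.val : ↥B → Fin n) (Subtype.val : ↥(Bᶜ) → Fin n)
        * (M.submatrix (Subtype.val : ↥(Bᶜ) → Fin n) (Subtype.val : ↥(Bᶜ) → Fin n)
            - lam • (1 : Matrix ↥(Bᶜ) ↥(Bᶜ) ℂ))⁻¹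
        * M.submatrix (Subtype.val : ↥(Bᶜ) → Fin n) (Subtype.val : ↥B → Fin n)).mulVec w
      = lam • w) :
    let v : Fin n → ℂ := fun x =>
      if hx : x ∈ B then w ⟨x, hx⟩
      else (-(((M.submatrix (Subtype.val : ↥(Bᶜ) → Fin n) (Subtype.val : ↥(Bᶜ) → Fin n)
            - lam • (1 : Matrix ↥(Bᶜ) ↥(Bᶜ) ℂ))⁻¹
          * M.submatrix (Subtype.val : ↥(Bᶜ) → Fin n) (Subtype.val : ↥B → Fin n)).mulVec w))
        ⟨x, Finset.mem_compl.mpr hx⟩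
    v ≠ 0 ∧ M.mulVec v = lam • v := by
  intro v
  set P := M.submatrix (Subtype.val : ↥B → Fin n) (Subtype.val : ↥B → Fin n) with hP
  set Q := M.submatrix (Subtype.val : ↥B → Fin n) (Subtype.val : ↥(Bᶜ) → Fin n) with hQ
  set Rm := M.submatrix (Subtype.val : ↥(Bᶜ) → Fin n) (Subtype.val : ↥B → Fin n) with hRm
  set S := M.submatrix (Subtype.val : ↥(Bᶜ) → Fin n) (Subtype.val : ↥(Bᶜ) → Fin n) with hS
  set u : ↥(Bᶜ) → ℂ := -(((S - lam • (1 : Matrix ↥(Bᶜ) ↥(Bᶜ) ℂ))⁻¹ * Rm).mulVec w) with hu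
  -- invertibility
  have hdet : IsUnit (S - lam • (1 : Matrix ↥(Bᶜ) ↥(Bᶜ) ℂ)).det := by
    rw [my_eval_charpoly S lam] at hlam
    rw [← neg_sub, Matrix.det_neg]
    exact (IsUnit.of_mul_eq_one (a := (-1 : ℂ) ^ Fintype.card ↥(Bᶜ))
      ((-1 : ℂ) ^ Fintype.card ↥(Bᶜ))
      (by rw [← mul_pow, neg_mul_neg, one_mul, one_pow])).mul
      (isUnit_iff_ne_zero.mpr hlam)
  have hblock := my_block_aux P Q Rm S lam w hdet heig
  have hvB : ∀ (y : ↥B), v y.val = w y := fun y => by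
    simp only [v, dif_pos y.2]
  have hvC : ∀ (y : ↥(Bᶜ)), v y.val = u y := fun y => by
    have hy : y.val ∉ B := Finset.mem_compl.mp y.2
    simp only [v, dif_neg hy, hu]
    rfl
  constructor
  · obtain ⟨y, hy⟩ := Function.ne_iff.mp hw
    intro h
    exact hy (by rw [← hvB y, h]; rfl)
  · funext x
    have hsum : M.mulVec v x = (∑ y : ↥B, M x y * w y) + (∑ y : ↥(Bᶜ), M x y * u y) := by
      rw [Matrix.mulVec, dotProduct, ← Finset.sum_add_sum_compl B]
      congr 1
      · rw [← Finset.sum_coe_sort]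
        exact Finset.sum_congr rfl fun y _ => by rw [hvB y]
      · rw [← Finset.sum_coe_sort]
        exact Finset.sum_congr rfl fun y _ => by rw [hvC y]
    by_cases hx : x ∈ B
    · have h1 : (∑ y : ↥B, M x y * w y) = P.mulVec w ⟨x, hx⟩ := rfl
      have h2 : (∑ y : ↥(Bᶜ), M x y * u y) = Q.mulVec u ⟨x, hx⟩ := rfl
      rw [hsum, h1, h2]
      have := congrFun hblock.1 ⟨x, hx⟩
      simp only [Pi.add_apply, Pi.smul_apply, smul_eq_mul] at this
      rw [this]
      simp only [Pi.smul_apply, smul_eq_mul, hvB ⟨x, hx⟩]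
    · have hx' : x ∈ Bᶜ := Finset.mem_compl.mpr hx
      have h1 : (∑ y : ↥B, M x y * w y) = Rm.mulVec w ⟨x, hx'⟩ := rfl
      have h2 : (∑ y : ↥(Bᶜ), M x y * u y) = S.mulVec u ⟨x, hx'⟩ := rfl
      rw [hsum, h1, h2]
      have := congrFun hblock.2 ⟨x, hx'⟩
      simp only [Pi.add_apply, Pi.smul_apply, smul_eq_mul] at this
      rw [this]
      simp only [Pi.smul_apply, smul_eq_mul, hvC ⟨x, hx'⟩]
      rfl
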